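/- Let G be a graph on n vertices with a Hamilton cycle v_0, v_1, …, v_{n−1}, v_0, and let a_1 < a_2 < b_1 < b_2 < c_1 < c_2 < d_1 < d_2 be indices in {0, …, n−1} such that {v_{a_1}, v_{c_2}}, {v_{a_2}, v_{c_1}}, {v_{b_1}, v_{d_2}}, and {v_{b_2}, v_{d_1}} are edges of G. Then G contains a cycle of length n − (a_2 − a_1 − 1) − (b_2 − b_1 − 1) − (c_2 − c_1 − 1) − (d_2 − d_1 − 1); in particular, this cycle contains all vertices of G except those v_i with a_1 < i < a_2 or b_1 < i < b_2 or c_1 < i < c_2 or d_1 < i < d_2. -/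

import Mathlib

open SimpleGraph List Fin.NatCast Fin.CommRing

variable {n : ℕ} [NeZero n] {G : SimpleGraph (Fin n)}

private lemma val_add_cast (i : Fin n) (k : ℕ) : (i + (k : Fin n)).val = (i.val + k) % n := by
  rw [Fin.add_def, Fin.val_natCast]
  exact Nat.add_mod_mod ..

private lemma mod_cases (m : ℕ) (x : ℕ) (h : x < m + m) :
    x % m = x ∧ x < m ∨ x % m = x - m ∧ m ≤ x := by
  rcases lt_or_ge x m with h' | h'
  · exact Or.inl ⟨Nat.mod_eq_of_lt h', h'⟩
  · refine Or.inr ⟨?_, h'⟩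
    rw [Nat.mod_eq_sub_mod h', Nat.mod_eq_of_lt (by omega)]

private def seg (hham : ∀ i : Fin n, G.Adj i (i + 1)) : (k : ℕ) → (i : Fin n) → G.Walk i (i + (k : Fin n))
  | 0, i => Walk.nil.copy rfl (by simp)
  | (k+1), i => (Walk.cons (hham i) (seg hham k (i+1))).copy rfl (by push_cast; ring)

private lemma seg_length (hham : ∀ i : Fin n, G.Adj i (i + 1)) (k : ℕ) (i : Fin n) :
    (seg hham k i).length = k := by
  induction k generalizing i with
  | zero => simp [seg]
  | succ k ih => simp [seg, ih]

private lemma seg_support (hham : ∀ i : Fin n, G.Adj i (i + 1)) (k : ℕ) (i : Fin n) :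
    (seg hham k i).support = (List.range (k+1)).map (fun j : ℕ => i + (j : Fin n)) := by
  induction k generalizing i with
  | zero =>
    rw [show (1:ℕ) = 0+1 from rfl, List.range_succ, List.range_zero]
    simp [seg]
  | succ k ih =>
    rw [show k + 1 + 1 = (k+1) + 1 from rfl, List.range_succ_eq_map, List.map_cons, List.map_map]
    simp only [seg, Walk.support_copy, Walk.support_cons, ih]
    congr 1
    · simp
    · refine List.map_congr_left fun j hj => ?_
      simp only [Function.comp_apply]
      push_cast
      ring

private lemma seg_edges (hham : ∀ i : Fin n, G.Adj i (i + 1)) (k : ℕ) (i : Fin n) :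
    (seg hham k i).edges
      = (List.range k).map (fun j : ℕ => s(i + (j : Fin n), i + ((j + 1 : ℕ) : Fin n))) := by
  induction k generalizing i with
  | zero => simp [seg]
  | succ k ih =>
    rw [List.range_succ_eq_map, List.map_cons, List.map_map]
    simp only [seg, Walk.edges_copy, Walk.edges_cons, ih]
    congr 1
    · simp
    · refine List.map_congr_left fun j hj => ?_
      simp only [Function.comp_apply]
      congr 1 <;> (push_cast; ring)


/-- Let `G` be a graph on `n` vertices whose vertices are labeled `0, …, n-1` along a
Hamilton cycle (so `i` is adjacent to `i+1` mod `n` for every `i`).  If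
`a₁ < a₂ < b₁ < b₂ < c₁ < c₂ < d₁ < d₂` are indices with `{v_{a₁}, v_{c₂}}`,
`{v_{a₂}, v_{c₁}}`, `{v_{b₁}, v_{d₂}}` and `{v_{b₂}, v_{d₁}}` edges of `G`, then `G`
contains a cycle of length `n - (a₂-a₁-1) - (b₂-b₁-1) - (c₂-c₁-1) - (d₂-d₁-1)` whose
vertex set consists of all vertices except those `i` with `a₁ < i < a₂`,
`b₁ < i < b₂`, `c₁ < i < c₂` or `d₁ < i < d₂`. -/
theorem cycle_of_two_crossing_chord_pairs {n : ℕ} [NeZero n]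
    (G : SimpleGraph (Fin n)) (hham : ∀ i : Fin n, G.Adj i (i + 1))
    (a₁ a₂ b₁ b₂ c₁ c₂ d₁ d₂ : Fin n)
    (h₁ : a₁ < a₂) (h₂ : a₂ < b₁) (h₃ : b₁ < b₂) (h₄ : b₂ < c₁) (h₅ : c₁ < c₂)
    (h₆ : c₂ < d₁) (h₇ : d₁ < d₂)
    (e₁ : G.Adj a₁ c₂) (e₂ : G.Adj a₂ c₁) (e₃ : G.Adj b₁ d₂) (e₄ : G.Adj b₂ d₁) :
    ∃ (u : Fin n) (cyc : G.Walk u u), cyc.IsCycle ∧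
      cyc.length =
        n - ((a₂ : ℕ) - (a₁ : ℕ) - 1) - ((b₂ : ℕ) - (b₁ : ℕ) - 1)
          - ((c₂ : ℕ) - (c₁ : ℕ) - 1) - ((d₂ : ℕ) - (d₁ : ℕ) - 1) ∧
      cyc.support.toFinset =
        Finset.univ.filter (fun i : Fin n =>
          ¬ ((a₁ < i ∧ i < a₂) ∨ (b₁ < i ∧ i < b₂) ∨
             (c₁ < i ∧ i < c₂) ∨ (d₁ < i ∧ i < d₂))) := by
  have H1 : a₁.val < a₂.val := h₁
  have H2 : a₂.val < b₁.val := h₂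
  have H3 : b₁.val < b₂.val := h₃
  have H4 : b₂.val < c₁.val := h₄
  have H5 : c₁.val < c₂.val := h₅
  have H6 : c₂.val < d₁.val := h₆
  have H7 : d₁.val < d₂.val := h₇
  have hn : d₂.val < n := d₂.isLt
  set k₁ := d₁.val - c₂.val with hk₁
  set k₂ := c₁.val - b₂.val with hk₂
  set k₃ := b₁.val - a₂.val with hk₃
  set k₄ := n - d₂.val + a₁.val with hk₄
  have p₁ : c₂ + (k₁ : Fin n) = d₁ := by
    apply Fin.ext; rw [val_add_cast, Nat.mod_eq_of_lt (by omega)]; omega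
  have p₂ : b₂ + (k₂ : Fin n) = c₁ := by
    apply Fin.ext; rw [val_add_cast, Nat.mod_eq_of_lt (by omega)]; omega
  have p₃ : a₂ + (k₃ : Fin n) = b₁ := by
    apply Fin.ext; rw [val_add_cast, Nat.mod_eq_of_lt (by omega)]; omega
  have p₄ : d₂ + (k₄ : Fin n) = a₁ := by
    apply Fin.ext
    rw [val_add_cast, show d₂.val + k₄ = n + a₁.val by omega, Nat.add_mod_left,
      Nat.mod_eq_of_lt a₁.isLt]
  have hA : (((seg hham k₁ c₂).copy rfl p₁).support).map Fin.val
      = (List.range (k₁+1)).map (fun j => c₂.val + j) := by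
    rw [Walk.support_copy, seg_support, List.map_map]
    refine List.map_congr_left fun j hj => ?_
    rw [List.mem_range] at hj
    simp only [Function.comp_apply, val_add_cast]
    exact Nat.mod_eq_of_lt (by omega)
  have hB : (((seg hham k₂ b₂).copy rfl p₂).support).map Fin.val
      = (List.range (k₂+1)).map (fun j => b₂.val + j) := by
    rw [Walk.support_copy, seg_support, List.map_map]
    refine List.map_congr_left fun j hj => ?_
    rw [List.mem_range] at hj
    simp only [Function.comp_apply, val_add_cast]
    exact Nat.mod_eq_of_lt (by omega)
  have hC : (((seg hham k₃ a₂).copy rfl p₃).support).map Fin.val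
      = (List.range (k₃+1)).map (fun j => a₂.val + j) := by
    rw [Walk.support_copy, seg_support, List.map_map]
    refine List.map_congr_left fun j hj => ?_
    rw [List.mem_range] at hj
    simp only [Function.comp_apply, val_add_cast]
    exact Nat.mod_eq_of_lt (by omega)
  have hD : (((seg hham k₄ d₂).copy rfl p₄).support).map Fin.val
      = (List.range (k₄+1)).map (fun j => (d₂.val + j) % n) := by
    rw [Walk.support_copy, seg_support, List.map_map]
    exact List.map_congr_left fun j _ => val_add_cast d₂ j
  have mA : ∀ v : ℕ, v ∈ (List.range (k₁+1)).map (fun j => c₂.val + j)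
      ↔ (c₂.val ≤ v ∧ v ≤ d₁.val) := by
    intro v
    simp only [List.mem_map, List.mem_range]
    constructor
    · rintro ⟨j, hj, rfl⟩; omega
    · intro h; exact ⟨v - c₂.val, by omega, by omega⟩
  have mB : ∀ v : ℕ, v ∈ (List.range (k₂+1)).map (fun j => b₂.val + j)
      ↔ (b₂.val ≤ v ∧ v ≤ c₁.val) := by
    intro v
    simp only [List.mem_map, List.mem_range]
    constructor
    · rintro ⟨j, hj, rfl⟩; omega
    · intro h; exact ⟨v - b₂.val, by omega, by omega⟩
  have mC : ∀ v : ℕ, v ∈ (List.range (k₃+1)).map (fun j => a₂.val + j)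
      ↔ (a₂.val ≤ v ∧ v ≤ b₁.val) := by
    intro v
    simp only [List.mem_map, List.mem_range]
    constructor
    · rintro ⟨j, hj, rfl⟩; omega
    · intro h; exact ⟨v - a₂.val, by omega, by omega⟩
  have mD : ∀ v : ℕ, v ∈ (List.range (k₄+1)).map (fun j => (d₂.val + j) % n)
      ↔ ((d₂.val ≤ v ∧ v < n) ∨ v ≤ a₁.val) := by
    intro v
    simp only [List.mem_map, List.mem_range]
    constructor
    · rintro ⟨j, hj, rfl⟩
      rcases mod_cases n (d₂.val + j) (by omega) with ⟨he, h2⟩ | ⟨he, h2⟩ <;>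
        rw [he] <;> omega
    · rintro (⟨hv1, hv2⟩ | hv)
      · refine ⟨v - d₂.val, by omega, ?_⟩
        rw [show d₂.val + (v - d₂.val) = v by omega, Nat.mod_eq_of_lt hv2]
      · refine ⟨v + n - d₂.val, by omega, ?_⟩
        rw [show d₂.val + (v + n - d₂.val) = v + n by omega, Nat.add_mod_right,
          Nat.mod_eq_of_lt (by omega)]
  have nA : ((List.range (k₁+1)).map (fun j => c₂.val + j)).Nodup :=
    List.nodup_range.map (fun x y h => by omega)
  have nB : ((List.range (k₂+1)).map (fun j => b₂.val + j)).Nodup :=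
    List.nodup_range.map (fun x y h => by omega)
  have nC : ((List.range (k₃+1)).map (fun j => a₂.val + j)).Nodup :=
    List.nodup_range.map (fun x y h => by omega)
  have nD : ((List.range (k₄+1)).map (fun j => (d₂.val + j) % n)).Nodup := by
    refine List.Nodup.map_on (fun x hx y hy h => ?_) List.nodup_range
    rw [List.mem_range] at hx hy
    rcases mod_cases n (d₂.val + x) (by omega) with ⟨m1, _⟩ | ⟨m1, _⟩ <;>
      rcases mod_cases n (d₂.val + y) (by omega) with ⟨m2, _⟩ | ⟨m2, _⟩ <;>
        rw [m1, m2] at h <;> omega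
  refine ⟨a₁, Walk.cons e₁
    (((seg hham k₁ c₂).copy rfl p₁).append (Walk.cons e₄.symm
      (((seg hham k₂ b₂).copy rfl p₂).append (Walk.cons e₂.symm
        (((seg hham k₃ a₂).copy rfl p₃).append (Walk.cons e₃
          ((seg hham k₄ d₂).copy rfl p₄))))))), ?_, ?_, ?_⟩
  · rw [Walk.cons_isCycle_iff]
    constructor
    · apply Walk.IsPath.mk'
      apply List.Nodup.of_map Fin.val
      simp only [Walk.support_append, Walk.support_cons, List.tail_cons, List.map_append,
        hA, hB, hC, hD]
      rw [List.nodup_append', List.nodup_append', List.nodup_append']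
      refine ⟨nA, ⟨nB, ⟨nC, nD, ?_⟩, ?_⟩, ?_⟩
      · intro v hv hv'
        rw [mC] at hv; rw [mD] at hv'; omega
      · intro v hv hv'
        rw [mB] at hv
        simp only [List.mem_append, mC, mD] at hv'
        omega
      · intro v hv hv'
        rw [mA] at hv
        simp only [List.mem_append, mB, mC, mD] at hv'
        omega
    · intro hmem
      simp only [Walk.edges_append, Walk.edges_cons, Walk.edges_copy, seg_edges,
        List.mem_append, List.mem_cons, List.mem_map, List.mem_range] at hmem
      obtain (⟨j, hj, hje⟩ | hje | ⟨j, hj, hje⟩ | hje | ⟨j, hj, hje⟩ | hje | ⟨j, hj, hje⟩) := hmem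
      · rw [Sym2.eq_iff] at hje
        rcases hje with ⟨hx, hy⟩ | ⟨hx, hy⟩ <;>
          (rw [Fin.ext_iff, val_add_cast] at hx hy
           rcases mod_cases n (c₂.val + j) (by omega) with ⟨m1, _⟩ | ⟨m1, _⟩ <;>
             rcases mod_cases n (c₂.val + (j+1)) (by omega) with ⟨m2, _⟩ | ⟨m2, _⟩ <;>
               (rw [m1] at hx; rw [m2] at hy; omega))
      · rw [Sym2.eq_iff] at hje
        rcases hje with ⟨hx, hy⟩ | ⟨hx, hy⟩ <;> (rw [Fin.ext_iff] at hx hy; omega)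
      · rw [Sym2.eq_iff] at hje
        rcases hje with ⟨hx, hy⟩ | ⟨hx, hy⟩ <;>
          (rw [Fin.ext_iff, val_add_cast] at hx hy
           rcases mod_cases n (b₂.val + j) (by omega) with ⟨m1, _⟩ | ⟨m1, _⟩ <;>
             rcases mod_cases n (b₂.val + (j+1)) (by omega) with ⟨m2, _⟩ | ⟨m2, _⟩ <;>
               (rw [m1] at hx; rw [m2] at hy; omega))
      · rw [Sym2.eq_iff] at hje
        rcases hje with ⟨hx, hy⟩ | ⟨hx, hy⟩ <;> (rw [Fin.ext_iff] at hx hy; omega)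
      · rw [Sym2.eq_iff] at hje
        rcases hje with ⟨hx, hy⟩ | ⟨hx, hy⟩ <;>
          (rw [Fin.ext_iff, val_add_cast] at hx hy
           rcases mod_cases n (a₂.val + j) (by omega) with ⟨m1, _⟩ | ⟨m1, _⟩ <;>
             rcases mod_cases n (a₂.val + (j+1)) (by omega) with ⟨m2, _⟩ | ⟨m2, _⟩ <;>
               (rw [m1] at hx; rw [m2] at hy; omega))
      · rw [Sym2.eq_iff] at hje
        rcases hje with ⟨hx, hy⟩ | ⟨hx, hy⟩ <;> (rw [Fin.ext_iff] at hx hy; omega)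
      · rw [Sym2.eq_iff] at hje
        rcases hje with ⟨hx, hy⟩ | ⟨hx, hy⟩ <;>
          (rw [Fin.ext_iff, val_add_cast] at hx hy
           rcases mod_cases n (d₂.val + j) (by omega) with ⟨m1, _⟩ | ⟨m1, _⟩ <;>
             rcases mod_cases n (d₂.val + (j+1)) (by omega) with ⟨m2, _⟩ | ⟨m2, _⟩ <;>
               (rw [m1] at hx; rw [m2] at hy; omega))
  · simp only [Walk.length_cons, Walk.length_append, Walk.length_copy, seg_length]
    omega
  · apply Finset.ext
    intro i
    have hi : i.val < n := i.isLt
    have eA : i ∈ ((seg hham k₁ c₂).copy rfl p₁).support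
        ↔ (c₂.val ≤ i.val ∧ i.val ≤ d₁.val) := by
      rw [← List.mem_map_of_injective Fin.val_injective, hA, mA]
    have eB : i ∈ ((seg hham k₂ b₂).copy rfl p₂).support
        ↔ (b₂.val ≤ i.val ∧ i.val ≤ c₁.val) := by
      rw [← List.mem_map_of_injective Fin.val_injective, hB, mB]
    have eC : i ∈ ((seg hham k₃ a₂).copy rfl p₃).support
        ↔ (a₂.val ≤ i.val ∧ i.val ≤ b₁.val) := by
      rw [← List.mem_map_of_injective Fin.val_injective, hC, mC]
    have eD : i ∈ ((seg hham k₄ d₂).copy rfl p₄).support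
        ↔ ((d₂.val ≤ i.val ∧ i.val < n) ∨ i.val ≤ a₁.val) := by
      rw [← List.mem_map_of_injective Fin.val_injective, hD, mD]
    simp only [Walk.support_cons, Walk.support_append, List.tail_cons, List.mem_toFinset,
      List.mem_cons, List.mem_append, Finset.mem_filter, Finset.mem_univ, true_and,
      eA, eB, eC, eD, Fin.ext_iff, Fin.lt_def]
    omega
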